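/- Let σ > 0 and let μ satisfy μ₁(σ) < μ < μ₂(σ), where μ₁(σ) = (√(2σ² + 4σ + 4) − σ − 2)/σ² and μ₂(σ) = 1/(σ + 4). Then the fully symmetric convergence–divergence game has exactly five equilibria in the unit square: {(x,y) ∈ [0,1] × [0,1] : F₁(x,y) = 0 and F₂(x,y) = 0} = {(1/2, 1/2), (1/2 + δ̃(σ,μ), 1/2 − δ̃(σ,μ)), (1/2 − δ̃(σ,μ), 1/2 + δ̃(σ,μ)), (1/2 + δ(σ,μ), 1/2 + δ(σ,μ)), (1/2 − δ(σ,μ), 1/2 − δ(σ,μ))}, where δ̃(σ,μ) = √(−(3σ² + 4σ)μ² − 2(σ² + 3σ + 2)μ + (σ + 1)²) / (2(σμ + σ + 1)) and δ(σ,μ) = √((σ² + 4σ)μ² − 2(σ + 2)μ + 1) / (2(σμ − 1)). -/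
import Mathlib


noncomputable def F1 (σ μ x y : ℝ) : ℝ :=
  ((1 - x) - μ) * x * (x + σ * x * (1 - y)) - (x - μ) * (1 - x) * ((1 - x) + σ * (1 - x) * y)

noncomputable def F2 (σ μ x y : ℝ) : ℝ :=
  ((1 - y) - μ) * y * (y + σ * y * (1 - x)) - (y - μ) * (1 - y) * ((1 - y) + σ * (1 - y) * x)

noncomputable def deltaTilde (σ μ : ℝ) : ℝ :=
  Real.sqrt (-(3 * σ^2 + 4 * σ) * μ^2 - 2 * (σ^2 + 3 * σ + 2) * μ + (σ + 1)^2) /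
    (2 * (σ * μ + σ + 1))

noncomputable def deltaD (σ μ : ℝ) : ℝ :=
  Real.sqrt ((σ^2 + 4 * σ) * μ^2 - 2 * (σ + 2) * μ + 1) / (2 * (σ * μ - 1))

set_option maxHeartbeats 2000000 in
theorem phase_III_five_equilibria (σ μ : ℝ) (hσ : 0 < σ)
    (hlo : (Real.sqrt (2 * σ^2 + 4 * σ + 4) - σ - 2) / σ^2 < μ) (hhi : μ < 1 / (σ + 4)) :
    {p : ℝ × ℝ | p ∈ Set.Icc (0:ℝ) 1 ×ˢ Set.Icc (0:ℝ) 1 ∧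
        F1 σ μ p.1 p.2 = 0 ∧ F2 σ μ p.1 p.2 = 0} =
      {(1/2, 1/2),
       (1/2 + deltaTilde σ μ, 1/2 - deltaTilde σ μ),
       (1/2 - deltaTilde σ μ, 1/2 + deltaTilde σ μ),
       (1/2 + deltaD σ μ, 1/2 + deltaD σ μ),
       (1/2 - deltaD σ μ, 1/2 - deltaD σ μ)} := by
  have hσ4 : (0:ℝ) < σ + 4 := by linarith
  have hs2 : (0:ℝ) < σ ^ 2 := by positivity
  -- μ > 0
  have hsqlt : (σ + 2 : ℝ) < Real.sqrt (2 * σ^2 + 4 * σ + 4) := by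
    rw [show (2 * σ^2 + 4 * σ + 4 : ℝ) = (σ+2)^2 + σ^2 by ring]
    nlinarith [Real.sqrt_le_sqrt (show ((σ+2):ℝ)^2 ≤ (σ+2)^2 + σ^2 by nlinarith),
      Real.sqrt_sq (show (0:ℝ) ≤ σ + 2 by linarith),
      Real.sq_sqrt (show (0:ℝ) ≤ (σ+2)^2 + σ^2 by positivity),
      Real.sqrt_nonneg ((σ+2)^2 + σ^2)]
  have hμpos : 0 < μ := by
    have h1 : 0 < (Real.sqrt (2 * σ^2 + 4 * σ + 4) - σ - 2) / σ^2 :=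
      div_pos (by linarith) hs2
    linarith
  have hμhi : μ * (σ + 4) < 1 := by
    rw [lt_div_iff₀ hσ4] at hhi; linarith
  have hσμ : σ * μ < 1 := by nlinarith
  -- key inequality from lower bound: σ²μ² + 2σμ + 4μ > 1
  have hkey : 1 < σ^2 * μ^2 + 2 * σ * μ + 4 * μ := by
    have h1 : Real.sqrt (2 * σ^2 + 4 * σ + 4) < σ^2 * μ + σ + 2 := by
      have := (div_lt_iff₀ hs2).mp hlo
      linarith
    have h2 : 2 * σ^2 + 4 * σ + 4 < (σ^2 * μ + σ + 2)^2 := by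
      nlinarith [Real.sq_sqrt (by positivity : (0:ℝ) ≤ 2 * σ^2 + 4 * σ + 4),
        Real.sqrt_nonneg (2 * σ^2 + 4 * σ + 4)]
    have h3 : σ^2 * 1 < σ^2 * (σ^2 * μ^2 + 2 * σ * μ + 4 * μ) := by nlinarith
    have := lt_of_mul_lt_mul_left h3 (le_of_lt hs2)
    linarith
  have hc : (0:ℝ) < σ * μ + σ + 1 := by positivity
  have hc' : σ * μ - 1 < 0 := by linarith
  -- radicands nonneg
  have hrt : (0:ℝ) ≤ -(3 * σ^2 + 4 * σ) * μ^2 - 2 * (σ^2 + 3 * σ + 2) * μ + (σ + 1)^2 := by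
    nlinarith [mul_pos hc (show (0:ℝ) < σ + 1 - (3*σ+4)*μ by nlinarith)]
  have hrd : (0:ℝ) ≤ (σ^2 + 4 * σ) * μ^2 - 2 * (σ + 2) * μ + 1 := by
    nlinarith [mul_pos (show (0:ℝ) < 1 - σ*μ by linarith)
      (show (0:ℝ) < 1 - (σ+4)*μ by nlinarith)]
  set t := deltaTilde σ μ with htdef
  set d := deltaD σ μ with hddef
  -- squared values
  have ht2 : 4 * (σ * μ + σ + 1) * t ^ 2 = σ + 1 - (3 * σ + 4) * μ := by
    rw [htdef, deltaTilde, div_pow, Real.sq_sqrt hrt]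
    field_simp
    ring
  have hd2 : 4 * (1 - σ * μ) * d ^ 2 = 1 - (σ + 4) * μ := by
    rw [hddef, deltaD, div_pow, Real.sq_sqrt hrd]
    have : σ * μ - 1 ≠ 0 := ne_of_lt hc'
    field_simp
    ring
  -- signs
  have htnn : 0 ≤ t := by
    rw [htdef, deltaTilde]
    exact div_nonneg (Real.sqrt_nonneg _) (by linarith)
  have hdnp : d ≤ 0 := by
    rw [hddef, deltaD]
    exact div_nonpos_of_nonneg_of_nonpos (Real.sqrt_nonneg _) (by linarith)
  clear_value t d
  clear htdef hddef hlo hhi hsqlt hrt hrd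
  -- bounds
  have ht4 : t^2 ≤ 1/4 := by
    by_contra h
    push_neg at h
    have h5 : (σ*μ+σ+1) * (1/4) < (σ*μ+σ+1) * t^2 := mul_lt_mul_of_pos_left h hc
    nlinarith [ht2]
  have hd4 : d^2 ≤ 1/4 := by
    by_contra h
    push_neg at h
    have h5 : (1-σ*μ) * (1/4) < (1-σ*μ) * d^2 :=
      mul_lt_mul_of_pos_left h (by linarith)
    nlinarith [hd2]
  have htle : t ≤ 1/2 := by nlinarith [ht4, htnn]
  have hdge : -(1/2) ≤ d := by nlinarith [hd4, hdnp]
  ext ⟨x, y⟩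
  simp only [Set.mem_setOf_eq, Set.mem_prod, Set.mem_Icc, Set.mem_insert_iff,
    Set.mem_singleton_iff, Prod.mk.injEq]
  constructor
  · rintro ⟨⟨⟨hx0, hx1⟩, hy0, hy1⟩, h1, h2⟩
    rw [F1] at h1
    rw [F2] at h2
    have hD : (x - y) * ((2+σ)*(1/4-μ) + σ*(1/4-μ/2)
        - (2+σ)*((x-1/2)^2+(x-1/2)*(y-1/2)+(y-1/2)^2)
        + σ*(1+2*μ)*(x-1/2)*(y-1/2)) = 0 := by linear_combination h1 - h2
    have hS : (x + y - 1) * ((2+σ)*(1/4-μ) - σ*(1/4-μ/2)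
        - (2+σ)*((x-1/2)^2-(x-1/2)*(y-1/2)+(y-1/2)^2)
        + σ*(1+2*μ)*(x-1/2)*(y-1/2)) = 0 := by linear_combination h1 + h2
    rcases mul_eq_zero.mp hD with hxy | hDbr
    · rcases mul_eq_zero.mp hS with hxy1 | hSbr
      · exact Or.inl ⟨by linarith, by linarith⟩
      · -- convergent branch: x = y
        have hEq : 4 * (1 - σ * μ) * (x - 1/2)^2 = 1 - (σ + 4) * μ := by
          linear_combination (-2) * hSbr
            + (4*y + 2*σ*y - 2 - 2*σ*x - 4*σ*μ*x + 2*σ*μ) * hxy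
        have hfac : (x - (1/2 + d)) * (x - (1/2 - d)) = 0 := by
          have h4 : 4 * (1 - σ * μ) * ((x - 1/2)^2 - d^2) = 0 := by
            linear_combination hEq - hd2
          have h5 : (x - 1/2)^2 - d^2 = 0 := by
            have hne : (4 : ℝ) * (1 - σ * μ) ≠ 0 := ne_of_gt (by linarith)
            exact (mul_eq_zero.mp h4).resolve_left hne
          linear_combination h5
        rcases mul_eq_zero.mp hfac with h | h
        · exact Or.inr (Or.inr (Or.inr (Or.inl ⟨by linarith, by linarith⟩)))
        · exact Or.inr (Or.inr (Or.inr (Or.inr ⟨by linarith, by linarith⟩)))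
    · rcases mul_eq_zero.mp hS with hxy1 | hSbr
      · -- divergent branch: x + y = 1
        have hEq : 4 * (σ * μ + σ + 1) * (x - 1/2)^2 = σ + 1 - (3 * σ + 4) * μ := by
          linear_combination (-2) * hDbr
            + (-4*y - 2*σ*y + 2 + 2*σ*x + 4*σ*μ*x - 2*σ*μ) * hxy1
        have hfac : (x - (1/2 + t)) * (x - (1/2 - t)) = 0 := by
          have h4 : 4 * (σ * μ + σ + 1) * ((x - 1/2)^2 - t^2) = 0 := by
            linear_combination hEq - ht2
          have h5 : (x - 1/2)^2 - t^2 = 0 := by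
            have hne : (4 : ℝ) * (σ * μ + σ + 1) ≠ 0 := ne_of_gt (by linarith)
            exact (mul_eq_zero.mp h4).resolve_left hne
          linear_combination h5
        rcases mul_eq_zero.mp hfac with h | h
        · exact Or.inr (Or.inl ⟨by linarith, by linarith⟩)
        · exact Or.inr (Or.inr (Or.inl ⟨by linarith, by linarith⟩))
      · -- both brackets zero: impossible
        exfalso
        have hid : (2+σ)^2 * (x - y)^2 = 1 - σ^2*μ^2 - 2*σ*μ - 4*μ := by
          linear_combination (1 - σ*μ) * hDbr + (σ*μ - σ - 3) * hSbr
        nlinarith [sq_nonneg ((2+σ) * (x - y))]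
  · rintro (⟨hx, hy⟩ | ⟨hx, hy⟩ | ⟨hx, hy⟩ | ⟨hx, hy⟩ | ⟨hx, hy⟩) <;> subst hx <;> subst hy
    · refine ⟨⟨⟨by norm_num, by norm_num⟩, by norm_num, by norm_num⟩, ?_, ?_⟩
      · rw [F1]; ring
      · rw [F2]; ring
    · refine ⟨⟨⟨by linarith, by linarith⟩, by linarith, by linarith⟩, ?_, ?_⟩
      · rw [F1]; linear_combination (-(t/2)) * ht2
      · rw [F2]; linear_combination (t/2) * ht2
    · refine ⟨⟨⟨by linarith, by linarith⟩, by linarith, by linarith⟩, ?_, ?_⟩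
      · rw [F1]; linear_combination (t/2) * ht2
      · rw [F2]; linear_combination (-(t/2)) * ht2
    · refine ⟨⟨⟨by linarith, by linarith⟩, by linarith, by linarith⟩, ?_, ?_⟩
      · rw [F1]; linear_combination (-(d/2)) * hd2
      · rw [F2]; linear_combination (-(d/2)) * hd2
    · refine ⟨⟨⟨by linarith, by linarith⟩, by linarith, by linarith⟩, ?_, ?_⟩
      · rw [F1]; linear_combination (d/2) * hd2
      · rw [F2]; linear_combination (d/2) * hd2
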